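/- Let R be a commutative ring equipped with a ℤ-grading by additive subgroups 𝒜(i), i ∈ ℤ, making R a graded ring (each element decomposes uniquely as a finite sum of homogeneous components, 1 ∈ 𝒜(0), and 𝒜(i)·𝒜(j) ⊆ 𝒜(i+j)); in particular 𝒜(0) is a subring of R. Then R is a Noetherian ring if and only if 𝒜(0) is a Noetherian ring and R is finitely generated as an 𝒜(0)-algebra. -/

import Mathlib

open DirectSum

section Aux

variable {R : Type*} [CommRing R] (𝒜 : ℤ → AddSubgroup R) [GradedRing 𝒜]

/-- From a finitely generated span, extract a finite subset of the generating set
that spans the same ideal. -/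
lemma samuel_exists_finset_span [IsNoetherianRing R] (s : Set R) :
    ∃ t : Finset R, ↑t ⊆ s ∧ Ideal.span (t : Set R) = Ideal.span s := by
  classical
  obtain ⟨F, hF⟩ := IsNoetherian.noetherian (Ideal.span s)
  have hmem : ∀ f ∈ F, ∃ t : Finset R, ↑t ⊆ s ∧ f ∈ Ideal.span (t : Set R) := by
    intro f hf
    exact Submodule.mem_span_finite_of_mem_span
      (hF ▸ Ideal.subset_span (by exact_mod_cast hf) : f ∈ Ideal.span s)
  choose t ht hft using hmem
  refine ⟨F.attach.biUnion (fun f => t f.1 f.2), ?_, le_antisymm ?_ ?_⟩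
  · intro x hx
    simp only [Finset.coe_biUnion, Set.mem_iUnion, Finset.mem_coe] at hx
    obtain ⟨f, -, hx⟩ := hx
    exact ht f.1 f.2 hx
  · refine Ideal.span_le.mpr ?_
    intro x hx
    simp only [Finset.coe_biUnion, Set.mem_iUnion, Finset.mem_coe] at hx
    obtain ⟨f, -, hx⟩ := hx
    exact Ideal.subset_span (ht f.1 f.2 hx)
  · rw [← hF]
    refine Ideal.span_le.mpr ?_
    intro f hf
    refine Ideal.span_mono ?_ (hft f hf)
    intro x hx
    simp only [Finset.coe_biUnion, Set.mem_iUnion, Finset.mem_coe]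
    exact ⟨⟨f, hf⟩, Finset.mem_attach _ _, hx⟩

lemma samuel_proj_mul (n d : ℤ) {z : R} (r : R) (hz : z ∈ 𝒜 d) :
    (DirectSum.decompose 𝒜 (r * z) n : R)
      = (DirectSum.decompose 𝒜 r (n - d) : R) * z := by
  have := DirectSum.coe_decompose_mul_add_of_right_mem 𝒜 (i := n - d) (j := d)
    (a := r) (b := z) hz
  rwa [sub_add_cancel] at this

lemma samuel_H (P : AddSubmonoid R) (s : Set R) (n : ℤ) {x : R}
    (hx : x ∈ Ideal.span s)
    (h : ∀ z ∈ s, ∀ r : R, (DirectSum.decompose 𝒜 (r * z) n : R) ∈ P) :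
    (DirectSum.decompose 𝒜 x n : R) ∈ P := by
  classical
  obtain ⟨c, hsupp, rfl⟩ := Submodule.mem_span_set.mp hx
  rw [← GradedRing.proj_apply, Finsupp.sum, map_sum]
  refine AddSubmonoid.sum_mem P ?_
  intro z hz
  rw [GradedRing.proj_apply, smul_eq_mul]
  exact h z (hsupp hz) (c z)

end Aux

/-- (P. Samuel) A `ℤ`-graded commutative ring `R` is Noetherian if and only if its
degree-zero part `𝒜 0` is Noetherian and `R` is a finitely generated `𝒜 0`-algebra. -/
theorem noetherian_iff_gradeZero_noetherian_and_finiteType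
    (R : Type*) [CommRing R] (𝒜 : ℤ → AddSubgroup R) [GradedRing 𝒜] :
    letI : Algebra (𝒜 0) R := (SetLike.GradeZero.subring 𝒜).subtype.toAlgebra
    (IsNoetherianRing R ↔
      IsNoetherianRing (𝒜 0) ∧ Algebra.FiniteType (𝒜 0) R) := by
  letI : Algebra (𝒜 0) R := (SetLike.GradeZero.subring 𝒜).subtype.toAlgebra
  classical
  constructor
  · intro hN
    haveI := hN
    constructor
    · -- `𝒜 0` is Noetherian
      rw [isNoetherianRing_iff_ideal_fg]
      intro J
      obtain ⟨T, hTsub, hTspan⟩ :=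
        samuel_exists_finset_span (Subtype.val '' (J : Set (𝒜 0)))
      have hT0 : ∀ z ∈ T, z ∈ 𝒜 0 := by
        intro z hz
        obtain ⟨j, -, rfl⟩ := hTsub hz
        exact j.2
      refine ⟨T.attach.image (fun z => (⟨z.1, hT0 z.1 z.2⟩ : 𝒜 0)), ?_⟩
      set T₀ : Finset (𝒜 0) := T.attach.image (fun z => (⟨z.1, hT0 z.1 z.2⟩ : 𝒜 0))
      apply le_antisymm
      · refine Ideal.span_le.mpr ?_
        intro y hy
        simp only [T₀, Finset.coe_image, Set.mem_image, Finset.mem_coe,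
          Finset.mem_attach, true_and] at hy
        obtain ⟨z, rfl⟩ := hy
        obtain ⟨j, hj, hjz⟩ := hTsub z.2
        have : (⟨z.1, hT0 z.1 z.2⟩ : 𝒜 0) = j := Subtype.ext hjz.symm
        rw [this]
        exact hj
      · intro x hx
        set P0 : AddSubmonoid R :=
          (Ideal.span (T₀ : Set (𝒜 0))).toAddSubmonoid.map (𝒜 0).subtype
        have hxP : (x : R) ∈ P0 := by
          have hx' : (x : R) ∈ Ideal.span (T : Set R) := by
            rw [hTspan]
            exact Ideal.subset_span ⟨x, hx, rfl⟩
          have := samuel_H 𝒜 P0 (T : Set R) 0 hx' ?_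
          · rwa [DirectSum.decompose_of_mem_same 𝒜 x.2] at this
          · intro z hz r
            rw [samuel_proj_mul 𝒜 0 0 r (hT0 z hz), sub_self]
            refine ⟨DirectSum.decompose 𝒜 r 0 * ⟨z, hT0 z hz⟩, ?_, rfl⟩
            refine Ideal.mul_mem_left _ _ (Ideal.subset_span ?_)
            simp only [T₀, Finset.coe_image, Set.mem_image, Finset.mem_coe,
              Finset.mem_attach, true_and]
            exact ⟨⟨z, hz⟩, rfl⟩
        obtain ⟨y, hy, hyx⟩ := hxP
        rwa [show y = x from Subtype.ext hyx] at hy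
    · -- `R` is a finitely generated `𝒜 0`-algebra
      obtain ⟨Zp, hZp_sub, hZp_span⟩ :=
        samuel_exists_finset_span {x : R | ∃ m : ℤ, 0 < m ∧ x ∈ 𝒜 m}
      obtain ⟨Zm, hZm_sub, hZm_span⟩ :=
        samuel_exists_finset_span {x : R | ∃ m : ℤ, m < 0 ∧ x ∈ 𝒜 m}
      choose degp hdegp_pos hdegp_mem using fun (z : R) (hz : z ∈ Zp) => hZp_sub hz
      choose degm hdegm_neg hdegm_mem using fun (z : R) (hz : z ∈ Zm) => hZm_sub hz
      choose S hS1 hS2 using fun n : ℤ => samuel_exists_finset_span ((𝒜 n : Set R))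
      set Dnat : ℕ := (Zp.attach.sup fun z => (degp z.1 z.2).toNat) ⊔
        (Zm.attach.sup fun z => (-degm z.1 z.2).toNat) with hDnat
      have hdp : ∀ z (hz : z ∈ Zp), degp z hz ≤ (Dnat : ℤ) := by
        intro z hz
        have h1 : (degp z hz).toNat ≤ Zp.attach.sup (fun z => (degp z.1 z.2).toNat) :=
          Finset.le_sup (f := fun z => (degp z.1 z.2).toNat) (Finset.mem_attach _ ⟨z, hz⟩)
        have h2 : Zp.attach.sup (fun z => (degp z.1 z.2).toNat) ≤ Dnat := by
          rw [hDnat]; exact le_sup_left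
        omega
      have hdm : ∀ z (hz : z ∈ Zm), -(Dnat : ℤ) ≤ degm z hz := by
        intro z hz
        have h1 : (-degm z hz).toNat ≤ Zm.attach.sup (fun z => (-degm z.1 z.2).toNat) :=
          Finset.le_sup (f := fun z => (-degm z.1 z.2).toNat) (Finset.mem_attach _ ⟨z, hz⟩)
        have h2 : Zm.attach.sup (fun z => (-degm z.1 z.2).toNat) ≤ Dnat := by
          rw [hDnat]; exact le_sup_right
        omega
      set G : Finset R := (Finset.Icc (-(2 * (Dnat : ℤ))) (2 * (Dnat : ℤ))).biUnion S
        with hG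
      set A : Subalgebra (𝒜 0) R := Algebra.adjoin (𝒜 0) (G : Set R) with hA
      have hGA : ∀ z ∈ G, z ∈ A := fun z hz => Algebra.subset_adjoin hz
      have h0A : ∀ y : 𝒜 0, (y : R) ∈ A := fun y => A.algebraMap_mem y
      have main : ∀ N : ℕ, ∀ n : ℤ, n.natAbs ≤ N → ∀ x, x ∈ 𝒜 n → x ∈ A := by
        intro N
        induction N using Nat.strong_induction_on with
        | _ N ih =>
          intro n hn x hx
          by_cases hsmall : n.natAbs ≤ 2 * Dnat
          · -- base case: bounded degree
            have hxspan : x ∈ Ideal.span ((S n : Set R)) := by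
              rw [hS2]
              exact Ideal.subset_span hx
            have key := samuel_H 𝒜 A.toSubsemiring.toAddSubmonoid _ n hxspan ?_
            · rwa [DirectSum.decompose_of_mem_same 𝒜 hx] at key
            · intro z hz r
              rw [samuel_proj_mul 𝒜 n n r (hS1 n hz), sub_self]
              show _ ∈ A
              refine mul_mem (h0A (DirectSum.decompose 𝒜 r 0)) (hGA z ?_)
              refine Finset.mem_biUnion.mpr ⟨n, ?_, hz⟩
              rw [Finset.mem_Icc]
              omega
          · push_neg at hsmall
            rcases lt_trichotomy n 0 with hneg | h0 | hpos
            · -- negative degree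
              have hxspan : x ∈ Ideal.span (Zm : Set R) := by
                rw [hZm_span]
                exact Ideal.subset_span ⟨n, hneg, hx⟩
              have key := samuel_H 𝒜 A.toSubsemiring.toAddSubmonoid _ n hxspan ?_
              · rwa [DirectSum.decompose_of_mem_same 𝒜 hx] at key
              · intro z hz r
                rw [samuel_proj_mul 𝒜 n (degm z hz) r (hdegm_mem z hz)]
                have hd1 := hdegm_neg z hz
                have hd2 := hdm z hz
                show _ ∈ A
                refine mul_mem ?_ ?_
                · exact ih ((n - degm z hz).natAbs) (by omega) _ le_rfl _
                    (SetLike.coe_mem _)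
                · exact ih ((degm z hz).natAbs) (by omega) _ le_rfl _
                    (hdegm_mem z hz)
            · omega
            · -- positive degree
              have hxspan : x ∈ Ideal.span (Zp : Set R) := by
                rw [hZp_span]
                exact Ideal.subset_span ⟨n, hpos, hx⟩
              have key := samuel_H 𝒜 A.toSubsemiring.toAddSubmonoid _ n hxspan ?_
              · rwa [DirectSum.decompose_of_mem_same 𝒜 hx] at key
              · intro z hz r
                rw [samuel_proj_mul 𝒜 n (degp z hz) r (hdegp_mem z hz)]
                have hd1 := hdegp_pos z hz
                have hd2 := hdp z hz
                show _ ∈ A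
                refine mul_mem ?_ ?_
                · exact ih ((n - degp z hz).natAbs) (by omega) _ le_rfl _
                    (SetLike.coe_mem _)
                · exact ih ((degp z hz).natAbs) (by omega) _ le_rfl _
                    (hdegp_mem z hz)
      refine ⟨⟨G, ?_⟩⟩
      refine (eq_top_iff (a := Algebra.adjoin (𝒜 0) (G : Set R))).mpr ?_
      intro x _
      rw [← DirectSum.sum_support_decompose 𝒜 x]
      exact Subalgebra.sum_mem _ fun i _ =>
        main i.natAbs i le_rfl _ (SetLike.coe_mem _)
  · rintro ⟨h1, h2⟩
    haveI := h1
    haveI := h2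
    exact Algebra.FiniteType.isNoetherianRing (𝒜 0) R
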